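/- Let w be a weight sequence and let 1 ≤ i < j ≤ n with j − i + 1 = 2δ even. Then N^δ(Φ(w)_j) = Φ(w)_{i−1} if and only if exactly δ of the indices i, i+1, …, j satisfy w(l) = ∨ (equivalently, exactly half of the indices between i and j inclusive lie in w_∨). -/

import Mathlib

open Module

namespace Springer

/-- The nilpotent endomorphism `N` of `ℂ^n` with two Jordan blocks of sizes `n-k` and `k`:
the basis vectors `e 0, …, e (n-k-1)` are `p 1, …, p (n-k)` and
`e (n-k), …, e (n-1)` are `q 1, …, q k`; `N` shifts each block down by one. -/
def Nmap (n k : ℕ) : (Fin n → ℂ) →ₗ[ℂ] (Fin n → ℂ) where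
  toFun x j := if h : j.val + 1 < n ∧ j.val + 1 ≠ n - k then x ⟨j.val + 1, h.1⟩ else 0
  map_add' x y := by
    funext j
    by_cases h : j.val + 1 < n ∧ j.val + 1 ≠ n - k <;> simp [h]
  map_smul' c x := by
    funext j
    by_cases h : j.val + 1 < n ∧ j.val + 1 ≠ n - k <;> simp [h]

/-- `span (p 1, …, p t, q 1, …, q b)` inside `ℂ^n`. -/
noncomputable def spanPQ (n k t b : ℕ) : Submodule ℂ (Fin n → ℂ) :=
  Submodule.span ℂ {x | ∃ j : Fin n,
    ((j.val < t ∧ j.val < n - k) ∨ (n - k ≤ j.val ∧ j.val < n - k + b)) ∧ x = Pi.single j 1}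

/-- `P = span (p 1, …, p (n-k))`. -/
noncomputable def Pmod (n k : ℕ) : Submodule ℂ (Fin n → ℂ) := spanPQ n k (n - k) 0

/-- `Q = span (q 1, …, q k)`. -/
noncomputable def Qmod (n k : ℕ) : Submodule ℂ (Fin n → ℂ) := spanPQ n k 0 k

/-- The projection of `V` onto `Q` along `P`. -/
def projQ (n k : ℕ) : (Fin n → ℂ) →ₗ[ℂ] (Fin n → ℂ) where
  toFun x j := if n - k ≤ j.val then x j else 0
  map_add' x y := by
    funext j
    by_cases h : n - k ≤ j.val
    · simp only [Pi.add_apply, if_pos h]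
    · simp only [Pi.add_apply, if_neg h, add_zero]
  map_smul' c x := by
    funext j
    by_cases h : n - k ≤ j.val
    · simp only [Pi.smul_apply, smul_eq_mul, if_pos h, RingHom.id_apply]
    · simp only [Pi.smul_apply, smul_eq_mul, if_neg h, mul_zero, RingHom.id_apply]

/-- A complete `N`-invariant flag in `ℂ^n`: a chain `F 0 ⊆ ⋯ ⊆ F n` with `dim F i = i`
(thus `F 0 = 0` and `F n = V`) and `N (F (i+1)) ⊆ F i`. -/
def IsNFlag (n k : ℕ) (F : Fin (n + 1) → Submodule ℂ (Fin n → ℂ)) : Prop :=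
  Monotone F ∧ (∀ i : Fin (n + 1), finrank ℂ (F i) = i.val) ∧
    ∀ i : Fin n, Submodule.map (Nmap n k) (F i.succ) ≤ F i.castSucc

/-- A flag is torus fixed if each subspace is spanned by its intersections with `P` and `Q`. -/
def TorusFixed (n k : ℕ) (F : Fin (n + 1) → Submodule ℂ (Fin n → ℂ)) : Prop :=
  ∀ i, F i = (F i ⊓ Pmod n k) ⊔ (F i ⊓ Qmod n k)

/-- A weight sequence (row-strict tableau) of shape `(n-k, k)`:
`true` encodes `∨` and `false` encodes `∧`; there are exactly `k` symbols `∨`. -/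
def IsWeightSeq (n k : ℕ) (w : Fin n → Bool) : Prop :=
  (Finset.univ.filter fun i => w i = true).card = k

/-- `t i` = number of 1-based positions `≤ i` labelled `∧`. -/
def tcount (n : ℕ) (w : Fin n → Bool) (i : ℕ) : ℕ :=
  (Finset.univ.filter fun j : Fin n => j.val < i ∧ w j = false).card

/-- `b i` = number of 1-based positions `≤ i` labelled `∨`. -/
def bcount (n : ℕ) (w : Fin n → Bool) (i : ℕ) : ℕ :=
  (Finset.univ.filter fun j : Fin n => j.val < i ∧ w j = true).card

/-- The torus fixed flag `Φ(w)` attached to a weight sequence `w`: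
`Φ(w) i = span (p 1, …, p (t i), q 1, …, q (b i))`. -/
noncomputable def PhiFlag (n k : ℕ) (w : Fin n → Bool) : Fin (n + 1) → Submodule ℂ (Fin n → ℂ) :=
  fun i => spanPQ n k (tcount n w i.val) (bcount n w i.val)

/-- A crossingless matching on the points `1, …, n`: a set of cups `(i, j)` with
`1 ≤ i < j ≤ n`, pairwise disjoint, mutually non-crossing, and such that no unmatched
point (ray) lies strictly inside any cup. -/
structure CrossinglessMatching (n : ℕ) where
  cups : Finset (ℕ × ℕ)
  mem_range : ∀ p ∈ cups, 1 ≤ p.1 ∧ p.1 < p.2 ∧ p.2 ≤ n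
  disjoint' : ∀ p ∈ cups, ∀ q ∈ cups, p ≠ q →
    p.1 ≠ q.1 ∧ p.1 ≠ q.2 ∧ p.2 ≠ q.1 ∧ p.2 ≠ q.2
  noncross : ∀ p ∈ cups, ∀ q ∈ cups, ¬(p.1 < q.1 ∧ q.1 < p.2 ∧ p.2 < q.2)
  rays_outside : ∀ p ∈ cups, ∀ m : ℕ, p.1 < m → m < p.2 → ∃ q ∈ cups, m = q.1 ∨ m = q.2

/-- The point `m ∈ {1, …, n}` is matched (lies on a cup) in `C`. -/
def Matched (n : ℕ) (C : CrossinglessMatching n) (m : ℕ) : Prop :=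
  ∃ p ∈ C.cups, m = p.1 ∨ m = p.2

/-- A standard tableau of shape `(n-k, k)`: a filling of the two-row Young diagram by
the numbers `1, …, n`, each used exactly once, with rows and columns strictly
decreasing read from the top left. -/
structure StandardTableau (n k : ℕ) where
  top : Fin (n - k) → ℕ
  bot : Fin k → ℕ
  top_strict : ∀ i j : Fin (n - k), i < j → top j < top i
  bot_strict : ∀ i j : Fin k, i < j → bot j < bot i
  col_strict : ∀ (i : Fin (n - k)) (j : Fin k), i.val = j.val → bot j < top i
  mem_iff : ∀ m : ℕ, (1 ≤ m ∧ m ≤ n) ↔ ((∃ i, top i = m) ∨ (∃ j, bot j = m))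
  top_ne_bot : ∀ (i : Fin (n - k)) (j : Fin k), top i ≠ bot j

/-- `C` is the crossingless matching `m(S)` associated with the standard tableau `S`:
it has `k` cups and its left cup endpoints are exactly the bottom-row entries of `S`. -/
def IsMatchOf (n k : ℕ) (S : StandardTableau n k) (C : CrossinglessMatching n) : Prop :=
  C.cups.card = k ∧ ∀ m : ℕ, (∃ p ∈ C.cups, p.1 = m) ↔ ∃ j, S.bot j = m

/-- The weight sequence of a standard tableau: `∨` (i.e. `true`) exactly on the
bottom-row entries. -/
def tabWeight (n k : ℕ) (S : StandardTableau n k) : Fin n → Bool :=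
  fun j => decide (∃ i, S.bot i = j.val + 1)

/-- The cup conditions cutting out `Y_S`: for every cup `(i, σ i)` of the matching,
`N ^ δ i (F (σ i)) = F (i - 1)` where `δ i = (σ i - i + 1)/2`. -/
def CupCond (n k : ℕ) (C : CrossinglessMatching n)
    (F : Fin (n + 1) → Submodule ℂ (Fin n → ℂ)) : Prop :=
  ∀ p ∈ C.cups, ∀ (h1 : p.1 - 1 < n + 1) (h2 : p.2 < n + 1),
    Submodule.map ((Nmap n k) ^ ((p.2 - p.1 + 1) / 2)) (F ⟨p.2, h2⟩) = F ⟨p.1 - 1, h1⟩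

/-- The ray conditions cutting out `Y_S` (for the weight sequence of `S`): for every
ray `m` of the matching, `F m = (N ^ b m)⁻¹ (range (N ^ (n - k - t m + b m)))`. -/
def RayCond (n k : ℕ) (w : Fin n → Bool) (C : CrossinglessMatching n)
    (F : Fin (n + 1) → Submodule ℂ (Fin n → ℂ)) : Prop :=
  ∀ m : ℕ, 1 ≤ m → ∀ hm : m < n + 1, ¬ Matched n C m →
    F ⟨m, hm⟩ = Submodule.comap ((Nmap n k) ^ (bcount n w m))
      (LinearMap.range ((Nmap n k) ^ (n - k - tcount n w m + bcount n w m)))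

/-- Membership in the (Spaltenstein–Vargas–Fung) component `Y_S`, where `C = m(S)`. -/
def InYS (n k : ℕ) (S : StandardTableau n k) (C : CrossinglessMatching n)
    (F : Fin (n + 1) → Submodule ℂ (Fin n → ℂ)) : Prop :=
  IsNFlag n k F ∧ CupCond n k C F ∧ RayCond n k (tabWeight n k S) C F

/-- The weight sequence `v` orients the crossingless matching `C`: opposite labels at
the two endpoints of every cup, and `∧` at every ray. -/
def OrientsMatching (n : ℕ) (v : Fin n → Bool) (C : CrossinglessMatching n) : Prop :=
  (∀ p ∈ C.cups, ∀ (h1 : p.1 - 1 < n) (h2 : p.2 - 1 < n),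
      v ⟨p.1 - 1, h1⟩ ≠ v ⟨p.2 - 1, h2⟩) ∧
  (∀ m : ℕ, 1 ≤ m → m ≤ n → ¬ Matched n C m → ∀ h : m - 1 < n, v ⟨m - 1, h⟩ = false)

/-- `C` is the matching `m(w)` produced from the weight sequence `w` by repeatedly
joining a pair `i < j` with `w i = ∨`, `w j = ∧` and all points strictly between them
already matched, until no such pair remains. -/
def IsMw (n : ℕ) (w : Fin n → Bool) (C : CrossinglessMatching n) : Prop :=
  (∀ p ∈ C.cups, ∀ (h1 : p.1 - 1 < n) (h2 : p.2 - 1 < n),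
      w ⟨p.1 - 1, h1⟩ = true ∧ w ⟨p.2 - 1, h2⟩ = false) ∧
  ¬ ∃ i j : ℕ, 1 ≤ i ∧ i < j ∧ j ≤ n ∧ ¬ Matched n C i ∧ ¬ Matched n C j ∧
      (∀ h : i - 1 < n, w ⟨i - 1, h⟩ = true) ∧ (∀ h : j - 1 < n, w ⟨j - 1, h⟩ = false) ∧
      (∀ m : ℕ, i < m → m < j → Matched n C m)

/-- `Cw` is the completed matching `C(w)`: a crossingless matching with `k` cups
containing `m(w) = Cm` on whose every cup `w` puts opposite labels. -/
def IsCw (n k : ℕ) (w : Fin n → Bool) (Cm Cw : CrossinglessMatching n) : Prop :=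
  Cm.cups ⊆ Cw.cups ∧ Cw.cups.card = k ∧
  ∀ p ∈ Cw.cups, ∀ (h1 : p.1 - 1 < n) (h2 : p.2 - 1 < n),
    w ⟨p.1 - 1, h1⟩ ≠ w ⟨p.2 - 1, h2⟩

/-- Membership in the closed attracting set `St(w)`, where `S = S(w)` and `Cw = C(w)`:
a flag of `Y_{S(w)}` such that `F i = Φ(w) i` for every `i` with `w i = ∧` which is a
left cup endpoint of `C(w)`. -/
def InSt (n k : ℕ) (w : Fin n → Bool) (S : StandardTableau n k)
    (Cw : CrossinglessMatching n) (F : Fin (n + 1) → Submodule ℂ (Fin n → ℂ)) : Prop :=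
  InYS n k S Cw F ∧
  ∀ i : ℕ, ∀ hi : i < n + 1, (∀ h : i - 1 < n, w ⟨i - 1, h⟩ = false) →
    (∃ p ∈ Cw.cups, p.1 = i) → F ⟨i, hi⟩ = PhiFlag n k w ⟨i, hi⟩

/-- The generating relation of `∼_C`: `a ∼ σ(a+1)` whenever `a+1` is a left cup
endpoint of `C`. -/
def cupRel (n : ℕ) (C : CrossinglessMatching n) (a b : ℕ) : Prop :=
  ∃ p ∈ C.cups, p.1 = a + 1 ∧ p.2 = b

/-- The equivalence relation `∼_C` on `{0, 1, …, n}`. -/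
def simRel (n : ℕ) (C : CrossinglessMatching n) : ℕ → ℕ → Prop :=
  Relation.EqvGen (cupRel n C)

/-- The equivalence relation `≈_{C,D}` on `{0, 1, …, n}` generated by `∼_C` and `∼_D`. -/
def approxRel (n : ℕ) (C D : CrossinglessMatching n) : ℕ → ℕ → Prop :=
  Relation.EqvGen (fun a b => cupRel n C a b ∨ cupRel n D a b)

/-- Adjacency in the glued diagram `D̄C`: `i` and `j` are joined by a cup of `C` or of `D`. -/
def Adj (n : ℕ) (C D : CrossinglessMatching n) (i j : ℕ) : Prop :=
  (i, j) ∈ C.cups ∨ (j, i) ∈ C.cups ∨ (i, j) ∈ D.cups ∨ (j, i) ∈ D.cups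

/-- Lying in the same connected component of the glued diagram `D̄C`. -/
def Conn (n : ℕ) (C D : CrossinglessMatching n) : ℕ → ℕ → Prop :=
  Relation.EqvGen (Adj n C D)

/-- The component of `v` in the glued diagram is a circle: every vertex of the
component is matched both in `C` and in `D`. -/
def IsCircleComp (n : ℕ) (C D : CrossinglessMatching n) (v : ℕ) : Prop :=
  ∀ u, Conn n C D u v → Matched n C u ∧ Matched n D u

/-- `v` is the leftmost vertex of its connected component (circle or line) of the
glued diagram. -/
def IsLeftmost (n : ℕ) (C D : CrossinglessMatching n) (v : ℕ) : Prop :=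
  1 ≤ v ∧ v ≤ n ∧ ∀ u, 1 ≤ u → Conn n C D u v → v ≤ u

/-- An orientation of the glued diagram `D̄C` (with `C = m(w)` and `D = m(w')`):
a weight sequence assigning opposite labels to the endpoints of every cup of `C` and
of `D`, agreeing with `w` at every ray of `C` and with `w'` at every ray of `D`. -/
def OrientsGlued (n k : ℕ) (w w' : Fin n → Bool) (C D : CrossinglessMatching n)
    (v : Fin n → Bool) : Prop :=
  IsWeightSeq n k v ∧
  (∀ p ∈ C.cups, ∀ (h1 : p.1 - 1 < n) (h2 : p.2 - 1 < n),
      v ⟨p.1 - 1, h1⟩ ≠ v ⟨p.2 - 1, h2⟩) ∧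
  (∀ p ∈ D.cups, ∀ (h1 : p.1 - 1 < n) (h2 : p.2 - 1 < n),
      v ⟨p.1 - 1, h1⟩ ≠ v ⟨p.2 - 1, h2⟩) ∧
  (∀ i : Fin n, ¬ Matched n C (i.val + 1) → v i = w i) ∧
  (∀ i : Fin n, ¬ Matched n D (i.val + 1) → v i = w' i)

/-- The component of `v0` in the glued diagram is orientable: it admits a labeling of
its vertices by `∧, ∨`, opposite across every edge, agreeing with `w` at every vertex
which is a ray of `C` and with `w'` at every vertex which is a ray of `D`. -/
def ComponentOrientable (n : ℕ) (w w' : Fin n → Bool) (C D : CrossinglessMatching n)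
    (v0 : ℕ) : Prop :=
  ∃ g : ℕ → Bool,
    (∀ i j, Conn n C D i v0 → Adj n C D i j → g i ≠ g j) ∧
    (∀ i, Conn n C D i v0 → 1 ≤ i → i ≤ n → ¬ Matched n C i →
      ∀ h : i - 1 < n, g i = w ⟨i - 1, h⟩) ∧
    (∀ i, Conn n C D i v0 → 1 ≤ i → i ≤ n → ¬ Matched n D i →
      ∀ h : i - 1 < n, g i = w' ⟨i - 1, h⟩)

/-- A walk in the glued multigraph `D̄C` from `a` to `b`: a list of edges, each tagged
by `true` (an edge of `C`) or `false` (an edge of `D`), consecutively incident. -/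
def IsGluedWalk (n : ℕ) (C D : CrossinglessMatching n) : ℕ → ℕ → List (Bool × ℕ × ℕ) → Prop
  | a, b, [] => a = b
  | a, b, e :: es =>
      (if e.1 = true then (e.2.1, e.2.2) ∈ C.cups else (e.2.1, e.2.2) ∈ D.cups) ∧
      ((a = e.2.1 ∧ IsGluedWalk n C D e.2.2 b es) ∨ (a = e.2.2 ∧ IsGluedWalk n C D e.2.1 b es))

/-- The standard flag of `ℂ^n`. -/
noncomputable def stdFlag (n k : ℕ) : Fin (n + 1) → Submodule ℂ (Fin n → ℂ) :=
  fun i => spanPQ n k (min i.val (n - k)) (i.val - (n - k))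


section Aux

/-- The index condition defining `spanPQ`. -/
def PQcond (n k t b : ℕ) (j : Fin n) : Prop :=
  (j.val < t ∧ j.val < n - k) ∨ (n - k ≤ j.val ∧ j.val < n - k + b)

lemma spanPQ_eq_span (n k t b : ℕ) :
    spanPQ n k t b = Submodule.span ℂ
      {x | ∃ j : Fin n, PQcond n k t b j ∧ x = Pi.single j 1} := rfl

lemma single_mem_spanPQ {n k t b : ℕ} {j : Fin n} (h : PQcond n k t b j) :
    (Pi.single j 1 : Fin n → ℂ) ∈ spanPQ n k t b :=
  Submodule.subset_span ⟨j, h, rfl⟩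

lemma spanPQ_apply_eq_zero {n k t b : ℕ} {x : Fin n → ℂ}
    (hx : x ∈ spanPQ n k t b) {j : Fin n} (hj : ¬ PQcond n k t b j) : x j = 0 := by
  have hle : spanPQ n k t b ≤
      Submodule.pi {j : Fin n | ¬ PQcond n k t b j} (fun _ => (⊥ : Submodule ℂ ℂ)) := by
    rw [spanPQ_eq_span, Submodule.span_le]
    rintro y ⟨m, hm, rfl⟩
    rw [SetLike.mem_coe, Submodule.mem_pi]
    intro i hi
    rw [Submodule.mem_bot]
    rcases eq_or_ne i m with rfl | hne
    · exact absurd hm hi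
    · simp [Pi.single_apply, hne]
  have hh := hle hx
  rw [Submodule.mem_pi] at hh
  simpa using hh j hj

lemma Nmap_single (n k : ℕ) (m : Fin n) :
    Nmap n k (Pi.single m (1 : ℂ)) =
      if 1 ≤ m.val ∧ m.val ≠ n - k then
        Pi.single (⟨m.val - 1, Nat.lt_of_le_of_lt (Nat.sub_le _ _) m.isLt⟩ : Fin n) 1
      else 0 := by
  funext j
  have hm := m.isLt
  have hj := j.isLt
  simp only [Nmap, LinearMap.coe_mk, AddHom.coe_mk]
  by_cases hc : 1 ≤ m.val ∧ m.val ≠ n - k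
  · rw [if_pos hc]
    by_cases h : j.val + 1 < n ∧ j.val + 1 ≠ n - k
    · rw [dif_pos h]
      simp only [Pi.single_apply, Fin.ext_iff, Fin.val_mk]
      by_cases he : j.val + 1 = m.val
      · rw [if_pos (by omega), if_pos (by omega)]
      · rw [if_neg (by omega), if_neg (by omega)]
    · rw [dif_neg h]
      simp only [Pi.single_apply, Fin.ext_iff, Fin.val_mk]
      rw [if_neg (by omega)]
  · rw [if_neg hc, Pi.zero_apply]
    by_cases h : j.val + 1 < n ∧ j.val + 1 ≠ n - k
    · rw [dif_pos h]
      simp only [Pi.single_apply, Fin.ext_iff, Fin.val_mk]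
      rw [if_neg (by omega)]
    · rw [dif_neg h]

lemma Npow_single (n k : ℕ) (δ : ℕ) (m : Fin n) :
    (Nmap n k ^ δ) (Pi.single m (1 : ℂ)) =
      if (m.val < n - k ∧ δ ≤ m.val) ∨ (n - k + δ ≤ m.val) then
        Pi.single (⟨m.val - δ, Nat.lt_of_le_of_lt (Nat.sub_le _ _) m.isLt⟩ : Fin n) 1
      else 0 := by
  induction δ generalizing m with
  | zero =>
    rw [pow_zero, Module.End.one_apply, if_pos (by omega)]
    congr 1
  | succ d ih =>
    rw [pow_succ, Module.End.mul_apply, Nmap_single]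
    have hm := m.isLt
    by_cases hc : 1 ≤ m.val ∧ m.val ≠ n - k
    · rw [if_pos hc, ih]
      try simp only [Fin.val_mk]
      by_cases h1 : (m.val - 1 < n - k ∧ d ≤ m.val - 1) ∨ (n - k + d ≤ m.val - 1)
      · rw [if_pos h1, if_pos (by omega)]
        exact congrArg (fun v : Fin n => Pi.single v (1 : ℂ))
          (Fin.ext (by (try simp only [Fin.val_mk]); omega))
      · rw [if_neg h1, if_neg (by omega)]
    · rw [if_neg hc, map_zero, if_neg (by omega)]

lemma map_pow_spanPQ (n k t b δ : ℕ) (ht : t ≤ n - k) (hb : n - k + b ≤ n) :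
    Submodule.map (Nmap n k ^ δ) (spanPQ n k t b) = spanPQ n k (t - δ) (b - δ) := by
  rw [spanPQ_eq_span, spanPQ_eq_span, Submodule.map_span]
  apply le_antisymm
  · rw [Submodule.span_le]
    rintro y ⟨x, ⟨m, hm, rfl⟩, rfl⟩
    rw [SetLike.mem_coe, Npow_single]
    have hmlt := m.isLt
    unfold PQcond at hm
    by_cases h : (m.val < n - k ∧ δ ≤ m.val) ∨ (n - k + δ ≤ m.val)
    · rw [if_pos h]
      apply Submodule.subset_span
      refine ⟨_, ?_, rfl⟩
      show (m.val - δ < t - δ ∧ m.val - δ < n - k) ∨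
        (n - k ≤ m.val - δ ∧ m.val - δ < n - k + (b - δ))
      omega
    · rw [if_neg h]
      exact Submodule.zero_mem _
  · rw [Submodule.span_le]
    rintro y ⟨r, hr, rfl⟩
    rw [SetLike.mem_coe]
    apply Submodule.subset_span
    have hrlt := r.isLt
    unfold PQcond at hr
    have hrd : r.val + δ < n := by rcases hr with ⟨h1, h2⟩ | ⟨h1, h2⟩ <;> omega
    refine ⟨Pi.single (⟨r.val + δ, hrd⟩ : Fin n) 1, ⟨⟨r.val + δ, hrd⟩, ?_, rfl⟩, ?_⟩
    · show (r.val + δ < t ∧ r.val + δ < n - k) ∨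
        (n - k ≤ r.val + δ ∧ r.val + δ < n - k + b)
      omega
    · rw [Npow_single]
      rw [if_pos (show ((⟨r.val + δ, hrd⟩ : Fin n).val < n - k ∧ δ ≤ r.val + δ) ∨
          (n - k + δ ≤ (⟨r.val + δ, hrd⟩ : Fin n).val) by
        (try simp only [Fin.val_mk]); omega)]
      exact congrArg (fun v : Fin n => Pi.single v (1 : ℂ))
        (Fin.ext (by (try simp only [Fin.val_mk]); omega))

lemma spanPQ_le_imp {n k t1 b1 t2 b2 : ℕ}
    (h : spanPQ n k t1 b1 ≤ spanPQ n k t2 b2)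
    (ht1 : t1 ≤ n - k) (hb1 : n - k + b1 ≤ n) : t1 ≤ t2 ∧ b1 ≤ b2 := by
  constructor
  · by_contra hlt
    push_neg at hlt
    have hjn : t2 < n := by omega
    have hmem : (Pi.single (⟨t2, hjn⟩ : Fin n) 1 : Fin n → ℂ) ∈ spanPQ n k t2 b2 :=
      h (single_mem_spanPQ (Or.inl
        ⟨show t2 < t1 by omega, show t2 < n - k by omega⟩))
    have hz := spanPQ_apply_eq_zero hmem (j := ⟨t2, hjn⟩)
      (by rintro (⟨h1, h2⟩ | ⟨h1, h2⟩) <;> (try simp only [Fin.val_mk] at h1 h2) <;> omega)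
    rw [Pi.single_eq_same] at hz
    exact one_ne_zero hz
  · by_contra hlt
    push_neg at hlt
    have hjn : n - k + b2 < n := by omega
    have hmem : (Pi.single (⟨n - k + b2, hjn⟩ : Fin n) 1 : Fin n → ℂ) ∈ spanPQ n k t2 b2 :=
      h (single_mem_spanPQ (Or.inr
        ⟨show n - k ≤ n - k + b2 by omega, show n - k + b2 < n - k + b1 by omega⟩))
    have hz := spanPQ_apply_eq_zero hmem (j := ⟨n - k + b2, hjn⟩)
      (by rintro (⟨h1, h2⟩ | ⟨h1, h2⟩) <;> (try simp only [Fin.val_mk] at h1 h2) <;> omega)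
    rw [Pi.single_eq_same] at hz
    exact one_ne_zero hz

lemma spanPQ_eq_iff {n k t1 b1 t2 b2 : ℕ}
    (ht1 : t1 ≤ n - k) (hb1 : n - k + b1 ≤ n)
    (ht2 : t2 ≤ n - k) (hb2 : n - k + b2 ≤ n) :
    spanPQ n k t1 b1 = spanPQ n k t2 b2 ↔ (t1 = t2 ∧ b1 = b2) := by
  constructor
  · intro h
    have h1 := spanPQ_le_imp h.le ht1 hb1
    have h2 := spanPQ_le_imp h.ge ht2 hb2
    omega
  · rintro ⟨rfl, rfl⟩; rfl

lemma card_filter_lt (n m : ℕ) (hm : m ≤ n) :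
    (Finset.univ.filter fun j : Fin n => j.val < m).card = m := by
  rcases eq_or_lt_of_le hm with rfl | hlt
  · rw [Finset.filter_true_of_mem (fun j _ => j.isLt), Finset.card_univ, Fintype.card_fin]
  · have he : (Finset.univ.filter fun j : Fin n => j.val < m) =
        Finset.Iio (⟨m, hlt⟩ : Fin n) := by
      ext j
      simp [Finset.mem_Iio, Fin.lt_def]
    rw [he, Fin.card_Iio]

lemma tcount_add_bcount (n : ℕ) (w : Fin n → Bool) (m : ℕ) (hm : m ≤ n) :
    tcount n w m + bcount n w m = m := by
  have key := Finset.card_filter_add_card_filter_not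
    (s := Finset.univ.filter fun j : Fin n => j.val < m)
    (fun j : Fin n => w j = true)
  rw [Finset.filter_filter, Finset.filter_filter, card_filter_lt n m hm] at key
  unfold tcount bcount
  have e2 : (Finset.univ.filter fun j : Fin n => j.val < m ∧ w j = false) =
      Finset.univ.filter fun j : Fin n => j.val < m ∧ ¬ w j = true := by
    apply Finset.filter_congr
    intro j _
    simp [Bool.not_eq_true]
  rw [e2]
  omega

lemma tcount_mono (n : ℕ) (w : Fin n → Bool) {m1 m2 : ℕ} (h : m1 ≤ m2) :
    tcount n w m1 ≤ tcount n w m2 :=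
  Finset.card_le_card (Finset.monotone_filter_right _
    (fun j _ hj => ⟨by omega, hj.2⟩))

lemma bcount_mono (n : ℕ) (w : Fin n → Bool) {m1 m2 : ℕ} (h : m1 ≤ m2) :
    bcount n w m1 ≤ bcount n w m2 :=
  Finset.card_le_card (Finset.monotone_filter_right _
    (fun j _ hj => ⟨by omega, hj.2⟩))

lemma bcount_top (n k : ℕ) (w : Fin n → Bool) (hw : IsWeightSeq n k w) :
    bcount n w n = k := by
  unfold bcount
  rw [← hw]
  congr 1
  apply Finset.filter_congr
  intro j _
  simp [j.isLt]

lemma bcount_split (n : ℕ) (w : Fin n → Bool) (i j : ℕ) (hi : 1 ≤ i) (hij : i ≤ j) :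
    bcount n w (i - 1) +
      (Finset.univ.filter fun l : Fin n =>
          i ≤ l.val + 1 ∧ l.val + 1 ≤ j ∧ w l = true).card = bcount n w j := by
  have key := Finset.card_filter_add_card_filter_not
    (s := Finset.univ.filter fun l : Fin n => l.val < j ∧ w l = true)
    (fun l : Fin n => l.val < i - 1)
  rw [Finset.filter_filter, Finset.filter_filter] at key
  have e1 : (Finset.univ.filter fun l : Fin n => (l.val < j ∧ w l = true) ∧ l.val < i - 1) =
      Finset.univ.filter fun l : Fin n => l.val < i - 1 ∧ w l = true := by
    apply Finset.filter_congr
    intro l _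
    constructor
    · rintro ⟨⟨-, h2⟩, h3⟩; exact ⟨h3, h2⟩
    · rintro ⟨h1, h2⟩; exact ⟨⟨by omega, h2⟩, h1⟩
  have e2 : (Finset.univ.filter fun l : Fin n => (l.val < j ∧ w l = true) ∧ ¬ l.val < i - 1) =
      Finset.univ.filter fun l : Fin n => i ≤ l.val + 1 ∧ l.val + 1 ≤ j ∧ w l = true := by
    apply Finset.filter_congr
    intro l _
    constructor
    · rintro ⟨⟨h1, h2⟩, h3⟩; exact ⟨by omega, by omega, h2⟩
    · rintro ⟨h1, h2, h3⟩; exact ⟨⟨by omega, h3⟩, by omega⟩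
  rw [e1, e2] at key
  exact key

end Aux

/-- For `1 ≤ i < j ≤ n` with `j - i + 1 = 2δ`, we have
`N^δ (Φ(w) j) = Φ(w) (i-1)` if and only if exactly `δ` of the indices `i, …, j`
carry the label `∨`. -/
theorem cup_condition_iff_half (n k : ℕ) (hn : 1 ≤ n) (hkn : 2 * k ≤ n)
    (w : Fin n → Bool) (hw : IsWeightSeq n k w)
    (i j δ : ℕ) (hi : 1 ≤ i) (hij : i < j) (hjn : j ≤ n) (hδ : j - i + 1 = 2 * δ) :
    Submodule.map ((Nmap n k) ^ δ) (PhiFlag n k w ⟨j, by omega⟩) =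
        PhiFlag n k w ⟨i - 1, by omega⟩ ↔
      (Finset.univ.filter fun l : Fin n =>
          i ≤ l.val + 1 ∧ l.val + 1 ≤ j ∧ w l = true).card = δ := by
  have hb1k : bcount n w j ≤ k := by
    have := bcount_mono n w (hjn : j ≤ n)
    rw [bcount_top n k w hw] at this
    exact this
  have hb0k : bcount n w (i - 1) ≤ k := by
    have := bcount_mono n w (show i - 1 ≤ n by omega)
    rw [bcount_top n k w hw] at this
    exact this
  have hs1 : tcount n w j + bcount n w j = j := tcount_add_bcount n w j hjn
  have hs0 : tcount n w (i - 1) + bcount n w (i - 1) = i - 1 :=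
    tcount_add_bcount n w (i - 1) (by omega)
  have hsplit := bcount_split n w i j hi (le_of_lt hij)
  have hsn : tcount n w n + bcount n w n = n := tcount_add_bcount n w n (le_refl n)
  have hbtop : bcount n w n = k := bcount_top n k w hw
  have htm1 : tcount n w j ≤ tcount n w n := tcount_mono n w hjn
  have htm0 : tcount n w (i - 1) ≤ tcount n w n := tcount_mono n w (by omega)
  have ht1 : tcount n w j ≤ n - k := by omega
  have ht0 : tcount n w (i - 1) ≤ n - k := by omega
  show Submodule.map (Nmap n k ^ δ)
      (spanPQ n k (tcount n w j) (bcount n w j)) =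
      spanPQ n k (tcount n w (i - 1)) (bcount n w (i - 1)) ↔ _
  have hbn1 : n - k + bcount n w j ≤ n := by omega
  have hbn0 : n - k + bcount n w (i - 1) ≤ n := by omega
  have htd : tcount n w j - δ ≤ n - k := by omega
  have hbd : n - k + (bcount n w j - δ) ≤ n := by omega
  rw [map_pow_spanPQ n k (tcount n w j) (bcount n w j) δ ht1 hbn1,
    spanPQ_eq_iff htd hbd ht0 hbn0]
  omega

end Springer
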